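/- Assume b < 0 and let N* be the unique solution of N·I(N) = 1. Then for every firing rate sequence {N_{k,∞}} with arbitrary initial value N_{0,∞} ≥ 0: the even-indexed subsequence {N_{2k,∞}} and the odd-indexed subsequence {N_{2k+1,∞}} are both monotone and contained in [0, 1/I(0)] from index 1 on, hence convergent; their limits N⁺ := lim N_{2k,∞} and N⁻ := lim N_{2k+1,∞} satisfy 1/I(N⁺) = N⁻ and 1/I(N⁻) = N⁺; and either N⁻ = N⁺ = N*, or N⁻ ≠ N⁺ with min(N⁻,N⁺) < N* < max(N⁻,N⁺). -/
import Mathlib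

open MeasureTheory Real Filter

/-- The function `I(N)` from the NNLIF model. -/
noncomputable def Ifun (b V_R V_F N : ℝ) : ℝ :=
  ∫ v in Set.Iic V_F,
    Real.exp (-(v - b * N) ^ 2 / 2) * ∫ w in (max v V_R)..V_F, Real.exp ((w - b * N) ^ 2 / 2)

noncomputable def Igrand (b V_R V_F N v : ℝ) : ℝ :=
  Real.exp (-(v - b * N) ^ 2 / 2) * ∫ w in (max v V_R)..V_F, Real.exp ((w - b * N) ^ 2 / 2)

lemma Ifun_eq (b V_R V_F N : ℝ) :
    Ifun b V_R V_F N = ∫ v in Set.Iic V_F, Igrand b V_R V_F N v := rfl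

lemma Igrand_cont (b V_R V_F : ℝ) :
    Continuous fun p : ℝ × ℝ => Igrand b V_R V_F p.1 p.2 := by
  unfold Igrand
  apply Continuous.mul
  · fun_prop
  · have h : (fun p : ℝ × ℝ => ∫ w in (max p.2 V_R)..V_F, Real.exp ((w - b * p.1) ^ 2 / 2))
        = fun p : ℝ × ℝ => -∫ w in V_F..(max p.2 V_R), Real.exp ((w - b * p.1) ^ 2 / 2) := by
      funext p; rw [intervalIntegral.integral_symm]
    rw [h]
    apply Continuous.neg
    apply intervalIntegral.continuous_parametric_intervalIntegral_of_continuous (μ := volume)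
      (f := fun (p : ℝ × ℝ) w => Real.exp ((w - b * p.1) ^ 2 / 2))
    · fun_prop
    · exact continuous_snd.max continuous_const

lemma Igrand_bound (b V_R V_F : ℝ) (hV : V_R ≤ V_F) (R : ℝ) {N v : ℝ}
    (hN : |b * N| ≤ R) (hv : v ≤ V_F) :
    ‖Igrand b V_R V_F N v‖ ≤
      (Real.exp (R ^ 2 / 2) * ((V_F - V_R) * Real.exp ((|V_R| + |V_F| + R) ^ 2 / 2)))
        * Real.exp (-v ^ 2 / 4) := by
  set c := b * N with hc
  set M := |V_R| + |V_F| + R with hM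
  set a := max v V_R with ha
  have haV : a ≤ V_F := max_le hv hV
  have haR : V_R ≤ a := le_max_right _ _
  clear_value c M a
  have hJ : ‖∫ w in a..V_F, Real.exp ((w - c) ^ 2 / 2)‖
      ≤ Real.exp (M ^ 2 / 2) * (V_F - V_R) := by
    have h1 : ∀ w ∈ Set.uIoc a V_F, ‖Real.exp ((w - c) ^ 2 / 2)‖ ≤ Real.exp (M ^ 2 / 2) := by
      intro w hw
      rw [Set.uIoc_of_le haV] at hw
      obtain ⟨hwa, hwb⟩ := hw
      have hw1 : V_R < w := lt_of_le_of_lt haR hwa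
      have habs : |w - c| ≤ M := by
        have h2 : |w| ≤ |V_R| + |V_F| := by
          rw [abs_le]
          constructor
          · nlinarith [abs_nonneg V_F, neg_abs_le V_R]
          · nlinarith [abs_nonneg V_R, le_abs_self V_F]
        calc |w - c| ≤ |w| + |c| := abs_sub _ _
          _ ≤ M := by rw [hM]; linarith
      have hsq : (w - c) ^ 2 ≤ M ^ 2 := by
        rw [← sq_abs]
        exact pow_le_pow_left₀ (abs_nonneg _) habs 2
      rw [Real.norm_eq_abs, abs_of_pos (Real.exp_pos _)]
      exact Real.exp_le_exp.mpr (by linarith)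
    calc ‖∫ w in a..V_F, Real.exp ((w - c) ^ 2 / 2)‖
        ≤ Real.exp (M ^ 2 / 2) * |V_F - a| :=
          intervalIntegral.norm_integral_le_of_norm_le_const h1
      _ ≤ Real.exp (M ^ 2 / 2) * (V_F - V_R) := by
          rw [abs_of_nonneg (by linarith)]
          have := Real.exp_pos (M ^ 2 / 2)
          nlinarith
  have hexp : Real.exp (-(v - c) ^ 2 / 2) ≤ Real.exp (R ^ 2 / 2) * Real.exp (-v ^ 2 / 4) := by
    rw [← Real.exp_add]
    apply Real.exp_le_exp.mpr
    have hc2 : c ^ 2 ≤ R ^ 2 := by rw [← sq_abs]; exact pow_le_pow_left₀ (abs_nonneg _) hN 2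
    nlinarith [sq_nonneg (v - 2 * c)]
  have hnn : (0:ℝ) < Real.exp (-(v - c) ^ 2 / 2) := Real.exp_pos _
  calc ‖Igrand b V_R V_F N v‖
      = Real.exp (-(v - c) ^ 2 / 2) * ‖∫ w in a..V_F, Real.exp ((w - c) ^ 2 / 2)‖ := by
        unfold Igrand
        rw [norm_mul, Real.norm_eq_abs, ← hc, ← ha, abs_of_pos hnn]
    _ ≤ (Real.exp (R ^ 2 / 2) * Real.exp (-v ^ 2 / 4)) * (Real.exp (M ^ 2 / 2) * (V_F - V_R)) := by
        apply mul_le_mul hexp hJ (norm_nonneg _)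
        positivity
    _ = (Real.exp (R ^ 2 / 2) * ((V_F - V_R) * Real.exp (M ^ 2 / 2))) * Real.exp (-v ^ 2 / 4) := by
        ring

lemma Igrand_cont_v (b V_R V_F N : ℝ) : Continuous fun v => Igrand b V_R V_F N v := by
  have h := (Igrand_cont b V_R V_F).comp (Continuous.prodMk_right N)
  exact h

lemma Igrand_cont_N (b V_R V_F v : ℝ) : Continuous fun N => Igrand b V_R V_F N v := by
  have h := (Igrand_cont b V_R V_F).comp (Continuous.prodMk_left v)
  exact h

lemma gauss_int (C : ℝ) : Integrable (fun v : ℝ => C * Real.exp (-v ^ 2 / 4)) := by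
  have h : (fun v : ℝ => C * Real.exp (-v ^ 2 / 4))
      = fun v : ℝ => C * Real.exp (-(1/4 : ℝ) * v ^ 2) := by
    funext v; ring_nf
  rw [h]
  exact (integrable_exp_neg_mul_sq (by norm_num : (0:ℝ) < 1/4)).const_mul C

lemma Igrand_integrableOn (b V_R V_F : ℝ) (hV : V_R ≤ V_F) (N : ℝ) :
    IntegrableOn (Igrand b V_R V_F N) (Set.Iic V_F) := by
  apply Integrable.mono' ((gauss_int
      ((Real.exp (|b*N| ^ 2 / 2) * ((V_F - V_R) * Real.exp ((|V_R| + |V_F| + |b*N|) ^ 2 / 2))))).restrict)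
    ((Igrand_cont_v b V_R V_F N).aestronglyMeasurable.restrict)
  rw [ae_restrict_iff' measurableSet_Iic]
  filter_upwards with v hv
  exact Igrand_bound b V_R V_F hV (|b*N|) le_rfl hv

lemma Igrand_nonneg (b V_R V_F : ℝ) (hV : V_R ≤ V_F) (N : ℝ) {v : ℝ} (hv : v ≤ V_F) :
    0 ≤ Igrand b V_R V_F N v := by
  unfold Igrand
  apply mul_nonneg (Real.exp_pos _).le
  exact intervalIntegral.integral_nonneg (max_le hv hV) (fun u _ => (Real.exp_pos _).le)

lemma Ifun_pos (b V_R V_F : ℝ) (hV : V_R < V_F) (N : ℝ) : 0 < Ifun b V_R V_F N := by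
  rw [Ifun_eq]
  rw [setIntegral_pos_iff_support_of_nonneg_ae ?_ (Igrand_integrableOn b V_R V_F hV.le N)]
  · have hsub : Set.Ioo (V_F - 1) V_F
        ⊆ Function.support (Igrand b V_R V_F N) ∩ Set.Iic V_F := by
      intro v hv
      refine ⟨Function.mem_support.mpr (ne_of_gt ?_), le_of_lt hv.2⟩
      unfold Igrand
      apply mul_pos (Real.exp_pos _)
      apply intervalIntegral.intervalIntegral_pos_of_pos_on
      · exact (by fun_prop : Continuous fun w => Real.exp ((w - b*N)^2/2)).intervalIntegrable _ _
      · intro x _; exact Real.exp_pos _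
      · exact max_lt hv.2 hV
    calc (0:ENNReal) < volume (Set.Ioo (V_F - 1) V_F) := by
          rw [Real.volume_Ioo]
          apply ENNReal.ofReal_pos.mpr; norm_num
      _ ≤ _ := measure_mono hsub
  · rw [EventuallyLE, ae_restrict_iff' measurableSet_Iic]
    filter_upwards with v hv
    exact Igrand_nonneg b V_R V_F hV.le N hv

lemma Ifun_mono (b V_R V_F : ℝ) (hV : V_R ≤ V_F) (hb : b ≤ 0) {N₁ N₂ : ℝ} (h : N₁ ≤ N₂) :
    Ifun b V_R V_F N₁ ≤ Ifun b V_R V_F N₂ := by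
  rw [Ifun_eq, Ifun_eq]
  apply setIntegral_mono_on (Igrand_integrableOn b V_R V_F hV N₁)
    (Igrand_integrableOn b V_R V_F hV N₂) measurableSet_Iic
  intro v hv
  have hv' : v ≤ V_F := hv
  unfold Igrand
  rw [← intervalIntegral.integral_const_mul, ← intervalIntegral.integral_const_mul]
  apply intervalIntegral.integral_mono_on (max_le hv' hV)
  · exact (by fun_prop :
      Continuous fun w => Real.exp (-(v - b*N₁)^2/2) * Real.exp ((w - b*N₁)^2/2)).intervalIntegrable _ _
  · exact (by fun_prop :
      Continuous fun w => Real.exp (-(v - b*N₂)^2/2) * Real.exp ((w - b*N₂)^2/2)).intervalIntegrable _ _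
  · intro w hw
    rw [← Real.exp_add, ← Real.exp_add]
    apply Real.exp_le_exp.mpr
    have hw1 : v ≤ w := le_trans (le_max_left _ _) hw.1
    have hcc : b * N₂ ≤ b * N₁ := by nlinarith
    nlinarith [mul_nonneg (sub_nonneg.mpr hw1) (sub_nonneg.mpr hcc)]

lemma Ifun_continuous (b V_R V_F : ℝ) (hV : V_R ≤ V_F) :
    Continuous fun N => Ifun b V_R V_F N := by
  rw [continuous_iff_continuousAt]
  intro N₀
  simp only [Ifun_eq]
  set R := |b| * (|N₀| + 1) with hR
  apply MeasureTheory.continuousAt_of_dominated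
    (bound := fun v => (Real.exp (R ^ 2 / 2) * ((V_F - V_R)
      * Real.exp ((|V_R| + |V_F| + R) ^ 2 / 2))) * Real.exp (-v ^ 2 / 4))
  · filter_upwards with N
    exact (Igrand_cont_v b V_R V_F N).aestronglyMeasurable.restrict
  · filter_upwards [Metric.closedBall_mem_nhds N₀ one_pos] with N hN
    rw [ae_restrict_iff' measurableSet_Iic]
    filter_upwards with v hv
    apply Igrand_bound b V_R V_F hV R ?_ hv
    have h1 : |N - N₀| ≤ 1 := by
      rw [Metric.mem_closedBall, Real.dist_eq] at hN; exact hN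
    have h2 : |N| ≤ |N₀| + 1 := by
      calc |N| = |(N - N₀) + N₀| := by ring_nf
        _ ≤ |N - N₀| + |N₀| := abs_add_le _ _
        _ ≤ |N₀| + 1 := by linarith
    calc |b * N| = |b| * |N| := abs_mul _ _
      _ ≤ R := by rw [hR]; exact mul_le_mul_of_nonneg_left h2 (abs_nonneg b)
  · exact (gauss_int _).restrict
  · filter_upwards with v
    exact (Igrand_cont_N b V_R V_F v).continuousAt

/-- helper: a monotone-or-antitone sequence bounded in `[0, C]` converges. -/
lemma conv_of_mono_bdd {u : ℕ → ℝ} {C : ℝ} (h : Monotone u ∨ Antitone u)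
    (hlb : ∀ k, 0 ≤ u k) (hub : ∀ k, u k ≤ C) : ∃ l, Tendsto u atTop (nhds l) := by
  rcases h with h | h
  · rcases tendsto_of_monotone h with h' | h'
    · exfalso
      obtain ⟨k, hk⟩ := (tendsto_atTop.mp h' (C + 1)).exists
      linarith [hub k]
    · exact h'
  · rcases tendsto_of_antitone h with h' | h'
    · exfalso
      obtain ⟨k, hk⟩ := (tendsto_atBot.mp h' (-1)).exists
      linarith [hlb k]
    · exact h'

/-- Step 1 of Theorem 2.5 (inhibitory case `b < 0`): the even- and odd-indexed subsequences
of any firing rate sequence are monotone, contained in `[0, 1/I(0)]` from index `1` on,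
hence convergent; their limits `N⁺`, `N⁻` satisfy `1/I(N⁺) = N⁻` and `1/I(N⁻) = N⁺`, and
either both equal the unique equilibrium `N*`, or they form a genuine 2-cycle
surrounding `N*`. -/
theorem firingRateSeq_inhibitory (b V_R V_F : ℝ) (hV : V_R < V_F) (hb : b < 0)
    (Nstar : ℝ) (hNstar : 0 < Nstar)
    (hfix : Nstar * Ifun b V_R V_F Nstar = 1)
    (huniq : ∀ N : ℝ, 0 ≤ N → N * Ifun b V_R V_F N = 1 → N = Nstar)
    (Nseq : ℕ → ℝ) (h0 : 0 ≤ Nseq 0)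
    (hrec : ∀ k : ℕ, Nseq (k + 1) = 1 / Ifun b V_R V_F (Nseq k)) :
    (Monotone (fun k => Nseq (2 * k)) ∨ Antitone (fun k => Nseq (2 * k))) ∧
    (Monotone (fun k => Nseq (2 * k + 1)) ∨ Antitone (fun k => Nseq (2 * k + 1))) ∧
    (∀ k : ℕ, 1 ≤ k → Nseq k ∈ Set.Icc 0 (1 / Ifun b V_R V_F 0)) ∧
    ∃ Nplus Nminus : ℝ,
      Tendsto (fun k => Nseq (2 * k)) atTop (nhds Nplus) ∧
      Tendsto (fun k => Nseq (2 * k + 1)) atTop (nhds Nminus) ∧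
      1 / Ifun b V_R V_F Nplus = Nminus ∧
      1 / Ifun b V_R V_F Nminus = Nplus ∧
      ((Nminus = Nstar ∧ Nplus = Nstar) ∨
        (Nminus ≠ Nplus ∧ min Nminus Nplus < Nstar ∧ Nstar < max Nminus Nplus)) := by
  have hIpos : ∀ N, 0 < Ifun b V_R V_F N := Ifun_pos b V_R V_F hV
  have hGpos : ∀ N, 0 < 1 / Ifun b V_R V_F N := fun N => one_div_pos.mpr (hIpos N)
  have hGanti : ∀ {N₁ N₂ : ℝ}, N₁ ≤ N₂ →
      1 / Ifun b V_R V_F N₂ ≤ 1 / Ifun b V_R V_F N₁ := fun {N₁ N₂} h =>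
    one_div_le_one_div_of_le (hIpos N₁) (Ifun_mono b V_R V_F hV.le hb.le h)
  have hnn : ∀ k, 0 ≤ Nseq k := by
    intro k
    cases k with
    | zero => exact h0
    | succ j => rw [hrec j]; exact (hGpos _).le
  have hub : ∀ k, Nseq (k + 1) ≤ 1 / Ifun b V_R V_F 0 := by
    intro k; rw [hrec k]; exact hGanti (hnn k)
  have hmem : ∀ k : ℕ, 1 ≤ k → Nseq k ∈ Set.Icc 0 (1 / Ifun b V_R V_F 0) := by
    intro k hk
    cases k with
    | zero => omega
    | succ j => exact ⟨hnn _, hub j⟩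
  have hstep : ∀ m n : ℕ, Nseq m ≤ Nseq n → Nseq (n + 1) ≤ Nseq (m + 1) := by
    intro m n h; rw [hrec m, hrec n]; exact hGanti h
  have hstep2 : ∀ k : ℕ, Nseq k ≤ Nseq (k + 2) → Nseq (k + 2) ≤ Nseq (k + 2 + 2) := by
    intro k h
    have h1 := hstep k (k + 2) h
    have h2 := hstep (k + 2 + 1) (k + 1) h1
    exact h2
  have hstep2' : ∀ k : ℕ, Nseq (k + 2) ≤ Nseq k → Nseq (k + 2 + 2) ≤ Nseq (k + 2) := by
    intro k h
    have h1 := hstep (k + 2) k h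
    have h2 := hstep (k + 1) (k + 2 + 1) h1
    exact h2
  have hcases : (Monotone (fun k => Nseq (2 * k)) ∨ Antitone (fun k => Nseq (2 * k))) ∧
      (Monotone (fun k => Nseq (2 * k + 1)) ∨ Antitone (fun k => Nseq (2 * k + 1))) := by
    rcases le_total (Nseq 0) (Nseq 2) with h02 | h02
    · have key : ∀ k : ℕ, Nseq (2 * k) ≤ Nseq (2 * k + 2) := by
        intro k
        induction k with
        | zero => simpa using h02
        | succ n ih =>
          have e : 2 * (n + 1) = 2 * n + 2 := by ring
          rw [e]
          exact hstep2 (2 * n) ih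
      constructor
      · left
        apply monotone_nat_of_le_succ
        intro k
        have e : 2 * (k + 1) = 2 * k + 2 := by ring
        rw [e]
        exact key k
      · right
        apply antitone_nat_of_succ_le
        intro k
        have h1 := hstep (2 * k) (2 * k + 2) (key k)
        have e : 2 * (k + 1) + 1 = 2 * k + 2 + 1 := by ring
        rw [e]
        exact h1
    · have key : ∀ k : ℕ, Nseq (2 * k + 2) ≤ Nseq (2 * k) := by
        intro k
        induction k with
        | zero => simpa using h02
        | succ n ih =>
          have e : 2 * (n + 1) = 2 * n + 2 := by ring
          rw [e]
          exact hstep2' (2 * n) ih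
      constructor
      · right
        apply antitone_nat_of_succ_le
        intro k
        have e : 2 * (k + 1) = 2 * k + 2 := by ring
        rw [e]
        exact key k
      · left
        apply monotone_nat_of_le_succ
        intro k
        have h1 := hstep (2 * k + 2) (2 * k) (key k)
        have e : 2 * (k + 1) + 1 = 2 * k + 2 + 1 := by ring
        rw [e]
        exact h1
  refine ⟨hcases.1, hcases.2, hmem, ?_⟩
  set C := max (Nseq 0) (1 / Ifun b V_R V_F 0) with hC
  have hubC : ∀ k, Nseq k ≤ C := by
    intro k
    cases k with
    | zero => exact le_max_left _ _
    | succ j => exact (hub j).trans (le_max_right _ _)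
  obtain ⟨Nplus, hplus⟩ := conv_of_mono_bdd hcases.1 (fun k => hnn _) (fun k => hubC _)
  obtain ⟨Nminus, hminus⟩ := conv_of_mono_bdd hcases.2 (fun k => hnn _) (fun k => hubC _)
  have hIcont := Ifun_continuous b V_R V_F hV.le
  have hGcont : ∀ N : ℝ, ContinuousAt (fun x => 1 / Ifun b V_R V_F x) N := by
    intro N
    exact ContinuousAt.div continuousAt_const hIcont.continuousAt (hIpos N).ne'
  have heq1 : 1 / Ifun b V_R V_F Nplus = Nminus := by
    have h1 : Tendsto (fun k => 1 / Ifun b V_R V_F (Nseq (2 * k))) atTop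
        (nhds (1 / Ifun b V_R V_F Nplus)) := (hGcont Nplus).tendsto.comp hplus
    have h2 : (fun k => 1 / Ifun b V_R V_F (Nseq (2 * k))) = fun k => Nseq (2 * k + 1) := by
      funext k; exact (hrec (2 * k)).symm
    rw [h2] at h1
    exact tendsto_nhds_unique h1 hminus
  have heq2 : 1 / Ifun b V_R V_F Nminus = Nplus := by
    have h1 : Tendsto (fun k => 1 / Ifun b V_R V_F (Nseq (2 * k + 1))) atTop
        (nhds (1 / Ifun b V_R V_F Nminus)) := (hGcont Nminus).tendsto.comp hminus
    have h2 : (fun k => 1 / Ifun b V_R V_F (Nseq (2 * k + 1))) = fun k => Nseq (2 * k + 2) := by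
      funext k
      rw [show 2 * k + 2 = (2 * k + 1) + 1 from by ring, hrec (2 * k + 1)]
    rw [h2] at h1
    have h3 : Tendsto (fun k => Nseq (2 * k + 2)) atTop (nhds Nplus) := by
      have h4 := hplus.comp (tendsto_add_atTop_nat 1)
      have h5 : ((fun k => Nseq (2 * k)) ∘ fun n => n + 1) = fun k => Nseq (2 * k + 2) := by
        funext k
        show Nseq (2 * (k + 1)) = Nseq (2 * k + 2)
        rw [show 2 * (k + 1) = 2 * k + 2 from by ring]
      rwa [h5] at h4
    exact tendsto_nhds_unique h1 h3
  have hplus_nn : 0 ≤ Nplus := ge_of_tendsto' hplus (fun k => hnn _)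
  have hGstar : 1 / Ifun b V_R V_F Nstar = Nstar := by
    exact (eq_one_div_of_mul_eq_one_left hfix).symm
  refine ⟨Nplus, Nminus, hplus, hminus, heq1, heq2, ?_⟩
  by_cases hne : Nminus = Nplus
  · left
    subst hne
    have hfix' : Nminus * Ifun b V_R V_F Nminus = 1 := by
      nth_rewrite 1 [← heq2]
      exact one_div_mul_cancel (hIpos Nminus).ne'
    have := huniq Nminus hplus_nn hfix'
    exact ⟨this, this⟩
  · right
    refine ⟨hne, ?_, ?_⟩ <;> rcases lt_or_gt_of_ne hne with hlt | hlt
    · rw [min_eq_left hlt.le]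
      by_contra hle
      push_neg at hle
      have h1 : 1 / Ifun b V_R V_F Nminus ≤ 1 / Ifun b V_R V_F Nstar := hGanti hle
      rw [heq2, hGstar] at h1
      linarith
    · rw [min_eq_right hlt.le]
      by_contra hle
      push_neg at hle
      have h1 : 1 / Ifun b V_R V_F Nplus ≤ 1 / Ifun b V_R V_F Nstar := hGanti hle
      rw [heq1, hGstar] at h1
      linarith
    · rw [max_eq_right hlt.le]
      by_contra hle
      push_neg at hle
      have h1 : 1 / Ifun b V_R V_F Nstar ≤ 1 / Ifun b V_R V_F Nplus := hGanti hle
      rw [heq1, hGstar] at h1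
      linarith
    · rw [max_eq_left hlt.le]
      by_contra hle
      push_neg at hle
      have h1 : 1 / Ifun b V_R V_F Nstar ≤ 1 / Ifun b V_R V_F Nminus := hGanti hle
      rw [heq2, hGstar] at h1
      linarith
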